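/- Let 1 ≤ q, p < ∞ and λ ≥ 1. If a connected metric two-measure space X = (X,d,ν,μ) satisfies a (q,p)-balance condition, then X satisfies a (λq, λp)-balance condition. -/

import Mathlib

open MeasureTheory Metric Set ENNReal

noncomputable section

/-- `ν` is doubling with constant `c`. -/
def IsDoubling {X : Type*} [MetricSpace X] [MeasurableSpace X]
    (ν : Measure X) (c : ℝ) : Prop :=
  ∀ (x : X) (r : ℝ), 0 < r → ν (Metric.ball x (2 * r)) ≤ ENNReal.ofReal c * ν (Metric.ball x r)

/-- `ν` is positive and finite on all balls. -/
def FinitePosOnBalls {X : Type*} [MetricSpace X] [MeasurableSpace X]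
    (ν : Measure X) : Prop :=
  ∀ (x : X) (r : ℝ), 0 < r → 0 < ν (Metric.ball x r) ∧ ν (Metric.ball x r) < ⊤

/-- The `(q,p)`-balance condition with constant `C`:
`(diam B'/diam B) (ν B'/ν B)^{1/q} ≤ C^{1/p} (μ B'/μ B)^{1/p}` for all balls
`B`, `B' = B(x',r')` with `x' ∈ B` and `0 < r' ≤ diam B`. -/
def Balance {X : Type*} [MetricSpace X] [MeasurableSpace X]
    (ν μ : Measure X) (q p C : ℝ) : Prop :=
  ∀ (x : X) (R : ℝ) (x' : X) (r' : ℝ), 0 < R → x' ∈ Metric.ball x R → 0 < r' →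
    r' ≤ Metric.diam (Metric.ball x R) →
    (Metric.diam (Metric.ball x' r') / Metric.diam (Metric.ball x R)) *
        ((ν (Metric.ball x' r')).toReal / (ν (Metric.ball x R)).toReal) ^ (1 / q)
      ≤ C ^ (1 / p) *
        ((μ (Metric.ball x' r')).toReal / (μ (Metric.ball x R)).toReal) ^ (1 / p)

/-- The `p`-balance condition with constant `C`:
`(diam B'/diam B)^p (ν B'/ν B) ≤ C (μ B'/μ B)` for all balls
`B`, `B' = B(x',r')` with `x' ∈ B` and `0 < r' ≤ diam B`. -/
def PBalance {X : Type*} [MetricSpace X] [MeasurableSpace X]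
    (ν μ : Measure X) (p C : ℝ) : Prop :=
  ∀ (x : X) (R : ℝ) (x' : X) (r' : ℝ), 0 < R → x' ∈ Metric.ball x R → 0 < r' →
    r' ≤ Metric.diam (Metric.ball x R) →
    (Metric.diam (Metric.ball x' r') / Metric.diam (Metric.ball x R)) ^ p *
        ((ν (Metric.ball x' r')).toReal / (ν (Metric.ball x R)).toReal)
      ≤ C * ((μ (Metric.ball x' r')).toReal / (μ (Metric.ball x R)).toReal)

/-- a `(q,p)`-balance condition implies a `(λq,λp)`-balance condition
for every `λ ≥ 1`, in a connected metric two-measure space. -/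
theorem stmt3 {X : Type*} [MetricSpace X] [MeasurableSpace X] [BorelSpace X]
    [ConnectedSpace X] (ν μ : Measure X) (q p lam : ℝ)
    (hq : 1 ≤ q) (hp : 1 ≤ p) (hlam : 1 ≤ lam)
    (cν cμ : ℝ) (hcν : 1 < cν) (hcμ : 1 < cμ)
    (hνd : IsDoubling ν cν) (hμd : IsDoubling μ cμ)
    (hνf : FinitePosOnBalls ν) (hμf : FinitePosOnBalls μ)
    (hbal : ∃ C > 0, Balance ν μ q p C) :
    ∃ C > 0, Balance ν μ (lam * q) (lam * p) C := by
  obtain ⟨C, hC, hB⟩ := hbal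
  have hq0 : 0 < q := lt_of_lt_of_le one_pos hq
  have hp0 : 0 < p := lt_of_lt_of_le one_pos hp
  have hl0 : 0 < lam := lt_of_lt_of_le one_pos hlam
  refine ⟨(2 : ℝ) ^ (lam * p) * C, by positivity, ?_⟩
  intro x R x' r' hR hx' hr' hr'le
  set a := Metric.diam (Metric.ball x' r') / Metric.diam (Metric.ball x R) with ha
  set b := (ν (Metric.ball x' r')).toReal / (ν (Metric.ball x R)).toReal with hb
  set d := (μ (Metric.ball x' r')).toReal / (μ (Metric.ball x R)).toReal with hd
  have hbase := hB x R x' r' hR hx' hr' hr'le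
  have hb0 : (0:ℝ) ≤ b := div_nonneg ENNReal.toReal_nonneg ENNReal.toReal_nonneg
  have hd0 : (0:ℝ) ≤ d := div_nonneg ENNReal.toReal_nonneg ENNReal.toReal_nonneg
  have ha0 : (0:ℝ) ≤ a := div_nonneg Metric.diam_nonneg Metric.diam_nonneg
  have hdiam : 0 < Metric.diam (Metric.ball x R) := lt_of_lt_of_le hr' hr'le
  have ha2 : a ≤ 2 := by
    rw [ha, div_le_iff₀ hdiam]
    calc Metric.diam (Metric.ball x' r') ≤ 2 * r' := Metric.diam_ball hr'.le
      _ ≤ 2 * Metric.diam (Metric.ball x R) := by linarith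
  have e1 : 1 / (lam * q) = (1/q) * (1/lam) := by field_simp
  have e2 : 1 / (lam * p) = (1/p) * (1/lam) := by field_simp
  rw [e1, e2, Real.rpow_mul hb0, Real.rpow_mul hd0,
      Real.mul_rpow (by positivity) hC.le]
  have h2 : ((2:ℝ) ^ (lam * p)) ^ ((1/p) * (1/lam)) = 2 := by
    rw [← Real.rpow_mul (by norm_num : (0:ℝ) ≤ 2),
        show lam * p * ((1/p) * (1/lam)) = 1 by field_simp, Real.rpow_one]
  rw [h2, Real.rpow_mul hC.le]
  -- goal : a * (b ^ (1/q)) ^ (1/lam) ≤ 2 * (C ^ (1/p)) ^ (1/lam) * (d ^ (1/p)) ^ (1/lam)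
  rcases eq_or_lt_of_le ha0 with h | hapos
  · rw [← h, zero_mul]
    positivity
  · have key : a * (b ^ (1/q)) ^ (1/lam) ≤ 2 * ((a * b ^ (1/q)) ^ (1/lam)) := by
      have hsplit : a = a ^ (1 - 1/lam) * a ^ (1/lam) := by
        rw [← Real.rpow_add hapos]
        ring_nf
        rw [Real.rpow_one]
      have h1 : a ^ (1 - 1/lam) ≤ 2 := by
        calc a ^ (1 - 1/lam) ≤ (2:ℝ) ^ (1 - 1/lam) := by
              apply Real.rpow_le_rpow ha0 ha2
              have : 1/lam ≤ 1 := by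
                rw [div_le_one hl0]; exact hlam
              linarith
          _ ≤ (2:ℝ) ^ (1:ℝ) := by
              apply Real.rpow_le_rpow_of_exponent_le one_le_two
              have : 0 ≤ 1/lam := by positivity
              linarith
          _ = 2 := Real.rpow_one 2
      calc a * (b ^ (1/q)) ^ (1/lam)
          = a ^ (1 - 1/lam) * (a ^ (1/lam) * (b ^ (1/q)) ^ (1/lam)) := by
            rw [← mul_assoc, ← hsplit]
        _ ≤ 2 * (a ^ (1/lam) * (b ^ (1/q)) ^ (1/lam)) := by
            apply mul_le_mul_of_nonneg_right h1
            positivity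
        _ = 2 * ((a * b ^ (1/q)) ^ (1/lam)) := by
            rw [Real.mul_rpow ha0 (by positivity)]
    calc a * (b ^ (1/q)) ^ (1/lam) ≤ 2 * ((a * b ^ (1/q)) ^ (1/lam)) := key
      _ ≤ 2 * ((C ^ (1/p) * d ^ (1/p)) ^ (1/lam)) := by
          apply mul_le_mul_of_nonneg_left _ (by norm_num)
          exact Real.rpow_le_rpow (by positivity) hbase (by positivity)
      _ = 2 * (C ^ (1/p)) ^ (1/lam) * (d ^ (1/p)) ^ (1/lam) := by
          rw [Real.mul_rpow (by positivity) (by positivity), mul_assoc]
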